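/- Let n ≥ 1 and let V ⊆ ℂ^n be a Zariski-closed set whose vanishing ideal I(V) is a prime ideal of ℂ[x_1,…,x_n] (i.e. V is irreducible). If V is nonempty and compact in the Euclidean topology, then V consists of exactly one point. -/

import Mathlib

/-- `V ⊆ K^n` is Zariski-closed if it is the common zero set of a set of
polynomials in `K[x_1,…,x_n]`. -/
def IsZariskiClosed (K : Type*) [CommRing K] (n : ℕ) (V : Set (Fin n → K)) : Prop :=
  ∃ S : Set (MvPolynomial (Fin n) K),
    V = {x : Fin n → K | ∀ p ∈ S, MvPolynomial.eval x p = 0}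

/-- The vanishing ideal `I(V)` of a subset `V ⊆ K^n`. -/
def vanishingIdealOf (K : Type*) [CommRing K] (n : ℕ) (V : Set (Fin n → K)) :
    Ideal (MvPolynomial (Fin n) K) where
  carrier := {p : MvPolynomial (Fin n) K | ∀ x ∈ V, MvPolynomial.eval x p = 0}
  add_mem' := by
    intro a b ha hb x hx
    simp [map_add, ha x hx, hb x hx]
  zero_mem' := by
    intro x hx
    simp
  smul_mem' := by
    intro c p hp x hx
    simp [smul_eq_mul, map_mul, hp x hx]


open MvPolynomial in
lemma key_alg (n : ℕ) (I : Ideal (MvPolynomial (Fin n) ℂ)) (hI : I.IsPrime) (i : Fin n)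
    (q : Polynomial ℂ) (hq : q ≠ 0) (hmem : Polynomial.aeval (X i : MvPolynomial (Fin n) ℂ) q ∈ I) :
    ∃ r : ℂ, X i - C r ∈ I := by
  have hsplit : q = Polynomial.C q.leadingCoeff *
      (q.roots.map fun a => Polynomial.X - Polynomial.C a).prod :=
    (IsAlgClosed.splits q).eq_prod_roots
  have h2 : Polynomial.aeval (X i : MvPolynomial (Fin n) ℂ) q =
      C q.leadingCoeff * ((q.roots.map fun a => X i - C a).prod) := by
    conv_lhs => rw [hsplit]
    rw [map_mul, map_multiset_prod, Multiset.map_map]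
    simp [Function.comp_def, algebraMap_eq]
  rw [h2] at hmem
  have hCnot : (C q.leadingCoeff : MvPolynomial (Fin n) ℂ) ∉ I := by
    intro hC
    have h1 : (1 : MvPolynomial (Fin n) ℂ) ∈ I := by
      have := I.mul_mem_right (C q.leadingCoeff⁻¹) hC
      rwa [← C_mul, mul_inv_cancel₀ (Polynomial.leadingCoeff_ne_zero.2 hq), C_1] at this
    exact hI.ne_top (I.eq_top_iff_one.2 h1)
  have hprod : (q.roots.map fun a => X i - C a).prod ∈ I :=
    ((hI.mem_or_mem hmem).resolve_left hCnot)
  obtain ⟨p, hp, hpI⟩ := (hI.multiset_prod_mem_iff_exists_mem _).1 hprod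
  obtain ⟨r, _, rfl⟩ := Multiset.mem_map.1 hp
  exact ⟨r, hpI⟩

open MvPolynomial in
lemma key_coord (n : ℕ) (I : Ideal (MvPolynomial (Fin n) ℂ)) (hI : I.IsPrime) (i : Fin n)
    (R : ℝ) (hR : 0 ≤ R)
    (hunit : ∀ c : ℂ, R < ‖c‖ → I ⊔ Ideal.span {X i - C c} = ⊤) :
    ∃ r : ℂ, X i - C r ∈ I := by
  by_contra hno
  push_neg at hno
  haveI : I.IsPrime := hI
  have halg : ∀ q : Polynomial ℂ,
      Polynomial.aeval (X i : MvPolynomial (Fin n) ℂ) q ∈ I → q = 0 := by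
    intro q hq
    by_contra hq0
    obtain ⟨r, hr⟩ := key_alg n I hI i q hq0 hq
    exact hno r hr
  let c : ℝ → ℂ := fun x => (R + 1 : ℝ) + x * Complex.I
  have hcre : ∀ x : ℝ, (c x).re = R + 1 := by intro x; simp [c]
  have hcnorm : ∀ x : ℝ, R < ‖c x‖ := by
    intro x
    have h2 : (R + 1 : ℝ) ≤ ‖c x‖ := by
      calc (R + 1 : ℝ) = (c x).re := (hcre x).symm
        _ ≤ |(c x).re| := le_abs_self _
        _ ≤ ‖c x‖ := Complex.abs_re_le_norm _
    linarith
  have hcinj : Function.Injective c := by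
    intro a b hab
    have h := congrArg Complex.im hab
    simpa [c] using h
  have hinv : ∀ x : ℝ, ∃ u : MvPolynomial (Fin n) ℂ ⧸ I,
      u * Ideal.Quotient.mkₐ ℂ I (X i - C (c x)) = 1 := by
    intro x
    have htop := hunit (c x) (hcnorm x)
    have h1 : (1 : MvPolynomial (Fin n) ℂ) ∈ I ⊔ Ideal.span {X i - C (c x)} := by
      rw [htop]; trivial
    obtain ⟨f, hf, g, hg, hfg⟩ := Submodule.mem_sup.1 h1
    obtain ⟨h, rfl⟩ := Ideal.mem_span_singleton'.1 hg
    refine ⟨Ideal.Quotient.mkₐ ℂ I h, ?_⟩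
    have h3 : Ideal.Quotient.mkₐ ℂ I (h * (X i - C (c x))) = Ideal.Quotient.mkₐ ℂ I (1 - f) := by
      congr 1; linear_combination hfg
    rw [map_mul] at h3
    have h4 : Ideal.Quotient.mkₐ ℂ I f = 0 := by
      rw [Ideal.Quotient.mkₐ_eq_mk, Ideal.Quotient.eq_zero_iff_mem]; exact hf
    rw [h3, map_sub, map_one, h4, sub_zero]
  choose u hu using hinv
  have hli : LinearIndependent ℂ u := by
    rw [linearIndependent_iff']
    intro s g hsum x₀ hx₀
    set t : MvPolynomial (Fin n) ℂ ⧸ I := Ideal.Quotient.mkₐ ℂ I (X i) with ht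
    have hfac : ∀ y : ℝ, Polynomial.aeval t (Polynomial.X - Polynomial.C (c y))
        = Ideal.Quotient.mkₐ ℂ I (X i - C (c y)) := by
      intro y
      rw [map_sub, Polynomial.aeval_X, Polynomial.aeval_C, ht, map_sub]
      congr 1
    set p : Polynomial ℂ := ∑ x ∈ s, Polynomial.C (g x) *
      ∏ y ∈ s.erase x, (Polynomial.X - Polynomial.C (c y)) with hp
    set P : MvPolynomial (Fin n) ℂ ⧸ I := ∏ y ∈ s, Ideal.Quotient.mkₐ ℂ I (X i - C (c y))
      with hP
    have hkey : ∀ x ∈ s, (∏ y ∈ s.erase x, Ideal.Quotient.mkₐ ℂ I (X i - C (c y))) = u x * P := by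
      intro x hx
      rw [hP, ← Finset.mul_prod_erase s _ hx, ← mul_assoc, hu x, one_mul]
    have haev : Polynomial.aeval t p = (∑ x ∈ s, g x • u x) * P := by
      rw [hp, map_sum, Finset.sum_mul]
      refine Finset.sum_congr rfl fun x hx => ?_
      rw [map_mul, Polynomial.aeval_C, map_prod]
      have : (∏ y ∈ s.erase x, Polynomial.aeval t (Polynomial.X - Polynomial.C (c y)))
          = u x * P := by
        rw [Finset.prod_congr rfl fun y _ => hfac y]
        exact hkey x hx
      rw [this, smul_mul_assoc]
      exact (Algebra.smul_def _ _).symm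
    rw [hsum, zero_mul] at haev
    have hmemp : Polynomial.aeval (X i : MvPolynomial (Fin n) ℂ) p ∈ I := by
      have h5 := Polynomial.aeval_algHom_apply (Ideal.Quotient.mkₐ ℂ I) (X i) p
      rw [← ht, haev] at h5
      rw [← Ideal.Quotient.eq_zero_iff_mem, ← Ideal.Quotient.mkₐ_eq_mk ℂ I]
      exact h5.symm
    have hp0 : p = 0 := halg p hmemp
    have hev := congrArg (Polynomial.eval (c x₀)) hp0
    rw [hp] at hev
    simp only [Polynomial.eval_finset_sum, Polynomial.eval_mul, Polynomial.eval_C,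
      Polynomial.eval_prod, Polynomial.eval_sub, Polynomial.eval_X, Polynomial.eval_zero] at hev
    rw [Finset.sum_eq_single x₀ (fun x hx hxne => by
        rw [Finset.prod_eq_zero (Finset.mem_erase.2 ⟨Ne.symm hxne, hx₀⟩) (by ring), mul_zero])
      (fun h => absurd hx₀ h)] at hev
    have hne : (∏ y ∈ s.erase x₀, (c x₀ - c y)) ≠ 0 :=
      Finset.prod_ne_zero_iff.2 fun y hy =>
        sub_ne_zero_of_ne fun hcc => (Finset.mem_erase.1 hy).1 (hcinj hcc).symm
    exact (mul_eq_zero.1 hev).resolve_right hne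
  have hcard : (Cardinal.mk ℝ) ≤ Module.rank ℂ (MvPolynomial (Fin n) ℂ ⧸ I) :=
    hli.cardinal_le_rank
  have hrankQ : Module.rank ℂ (MvPolynomial (Fin n) ℂ ⧸ I)
      ≤ Module.rank ℂ (MvPolynomial (Fin n) ℂ) :=
    (Ideal.Quotient.mkₐ ℂ I).toLinearMap.rank_le_of_surjective
      (Ideal.Quotient.mkₐ_surjective ℂ I)
  have hrankP : Module.rank ℂ (MvPolynomial (Fin n) ℂ) ≤ Cardinal.aleph0 := by
    rw [MvPolynomial.rank_eq]
    exact Cardinal.mk_le_aleph0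
  have hfin : (Cardinal.mk ℝ) ≤ Cardinal.aleph0 := hcard.trans (hrankQ.trans hrankP)
  rw [Cardinal.mk_real] at hfin
  exact absurd hfin (not_le.2 Cardinal.aleph0_lt_continuum)

open MvPolynomial in
/-- An irreducible Zariski-closed subset of `ℂ^n` that is nonempty and compact
in the Euclidean topology is a single point. -/
theorem irreducible_compact_affine_variety_is_point
    (n : ℕ) (hn : 1 ≤ n) (V : Set (Fin n → ℂ))
    (hV : IsZariskiClosed ℂ n V)
    (hprime : (vanishingIdealOf ℂ n V).IsPrime)
    (hne : V.Nonempty) (hcpt : IsCompact V) :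
    ∃ x : Fin n → ℂ, V = {x} := by
  classical
  obtain ⟨S, hS⟩ := hV
  set I := vanishingIdealOf ℂ n V with hI
  have hSI : ∀ p ∈ S, p ∈ I := by
    intro p hp x hx
    rw [hS] at hx; exact hx p hp
  have hVZ : V = MvPolynomial.zeroLocus ℂ I := by
    ext x
    constructor
    · intro hx q hq; simpa [MvPolynomial.coe_aeval_eq_eval] using hq x hx
    · intro hx
      rw [hS]; exact fun p hp => by simpa [MvPolynomial.coe_aeval_eq_eval] using hx p (hSI p hp)
  obtain ⟨r0, hr0⟩ := hcpt.isBounded.subset_closedBall 0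
  set R := max r0 0 with hRdef
  have hR : 0 ≤ R := le_max_right _ _
  have hbound : ∀ x ∈ V, ‖x‖ ≤ R := by
    intro x hx
    have h1 := hr0 hx
    rw [Metric.mem_closedBall, dist_zero_right] at h1
    exact h1.trans (le_max_left _ _)
  have hunit : ∀ i : Fin n, ∀ c : ℂ, R < ‖c‖ → I ⊔ Ideal.span {X i - C c} = ⊤ := by
    intro i c hc
    have hzl : MvPolynomial.zeroLocus ℂ (I ⊔ Ideal.span {X i - C c}) = ∅ := by
      rw [Set.eq_empty_iff_forall_notMem]
      intro x hx
      have hxV : x ∈ V := by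
        rw [hVZ]; exact fun p hp => hx p (Ideal.mem_sup_left hp)
      have hXc : eval x (X i - C c) = 0 :=
        hx _ (Ideal.mem_sup_right (Ideal.subset_span rfl))
      rw [map_sub, eval_X, eval_C, sub_eq_zero] at hXc
      have h1 : ‖c‖ ≤ ‖x‖ := by
        rw [← hXc]; exact norm_le_pi_norm x i
      have h2 := hbound x hxV
      linarith
    have hrad := MvPolynomial.vanishingIdeal_zeroLocus_eq_radical (K := ℂ) (I ⊔ Ideal.span {X i - C c})
    rw [hzl, MvPolynomial.vanishingIdeal_empty] at hrad
    exact Ideal.radical_eq_top.1 hrad.symm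
  have hconst : ∀ i : Fin n, ∃ r : ℂ, X i - C r ∈ I := fun i =>
    key_coord n I hprime i R hR (hunit i)
  choose r hr using hconst
  have hxr : ∀ x ∈ V, x = r := by
    intro x hx
    funext i
    have h0 : eval x (X i - C (r i)) = 0 := (hr i) x hx
    rw [map_sub, eval_X, eval_C, sub_eq_zero] at h0
    exact h0
  obtain ⟨x₀, hx₀⟩ := hne
  refine ⟨r, Set.eq_singleton_iff_unique_mem.2 ⟨?_, fun y hy => hxr y hy⟩⟩
  rw [← hxr x₀ hx₀]; exact hx₀
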